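/- Let K be a finitely generated free ℤ-module with a symmetric bilinear form b, with adjoint map b̂ : K → K*. Suppose the cokernel of b̂ is torsion-free. Let rad(b) = {x ∈ K : b(x,y) = 0 for all y ∈ K}. Then K/rad(b) is a free ℤ-module and the induced symmetric bilinear form on K/rad(b) is unimodular (its adjoint is an isomorphism onto the dual of K/rad(b)). -/

import Mathlib

instance intModuleSubsingleton (M : Type*) [AddCommGroup M] : Subsingleton (Module ℤ M) :=
  @Unique.instSubsingleton _ AddCommGroup.uniqueIntModule

section Aux

attribute [-instance] AddCommGroup.toIntModule

theorem quotient_by_radical_unimodular_aux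
    {K : Type*} [AddCommGroup K] [Module ℤ K] [Module.Free ℤ K] [Module.Finite ℤ K]
    (b : K →ₗ[ℤ] Module.Dual ℤ K) (hsym : ∀ x y : K, b x y = b y x)
    (htf : ∀ (x : Module.Dual ℤ K ⧸ LinearMap.range b) (n : ℤ), n • x = 0 → n = 0 ∨ x = 0) :
    Module.Free ℤ (K ⧸ LinearMap.ker b) ∧
    ∃ b' : (K ⧸ LinearMap.ker b) →ₗ[ℤ] (K ⧸ LinearMap.ker b) →ₗ[ℤ] ℤ,
      (∀ x y : K, b' (Submodule.Quotient.mk x) (Submodule.Quotient.mk y) = b x y) ∧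
      Function.Bijective b' := by
  classical
  -- the induced bilinear map on the quotient
  have hker : ∀ x : K, LinearMap.ker b ≤ LinearMap.ker (b x) := by
    intro x y hy
    have h0 : b y = 0 := hy
    simp only [LinearMap.mem_ker]
    rw [hsym x y, h0]
    rfl
  let G : K →ₗ[ℤ] Module.Dual ℤ (K ⧸ LinearMap.ker b) :=
    { toFun := fun x => (LinearMap.ker b).liftQ (b x) (hker x)
      map_add' := fun x y => by
        apply Submodule.linearMap_qext
        ext z
        simp
      map_smul' := fun c x => by
        apply Submodule.linearMap_qext
        ext z
        simp }
  have hG : LinearMap.ker b ≤ LinearMap.ker G := by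
    intro x hx
    have hb0 : b x = 0 := hx
    simp only [LinearMap.mem_ker]
    apply Submodule.linearMap_qext
    ext z
    simp [G, hb0]
  let b' : (K ⧸ LinearMap.ker b) →ₗ[ℤ] Module.Dual ℤ (K ⧸ LinearMap.ker b) :=
    (LinearMap.ker b).liftQ G hG
  have hb'mk : ∀ x y : K,
      b' (Submodule.Quotient.mk x) (Submodule.Quotient.mk y) = b x y := fun x y => by
    simp [b', G]
  -- injectivity
  have hinj : Function.Injective b' := by
    rw [← LinearMap.ker_eq_bot, Submodule.eq_bot_iff]
    rintro q hq
    obtain ⟨x, rfl⟩ := Submodule.Quotient.mk_surjective _ q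
    have hq' : b' (Submodule.Quotient.mk x) = 0 := hq
    have hx : b x = 0 := by
      ext y
      have h1 := congrArg (fun f => f (Submodule.Quotient.mk y : K ⧸ LinearMap.ker b)) hq'
      simpa [hb'mk] using h1
    exact (Submodule.Quotient.mk_eq_zero _).mpr hx
  -- freeness of the quotient
  haveI hfree : Module.Free ℤ (K ⧸ LinearMap.ker b) :=
    Module.Free.of_equiv (LinearMap.quotKerEquivRange b).symm
  haveI hfinQ : Module.Finite ℤ (K ⧸ LinearMap.ker b) := Module.Finite.of_surjective (LinearMap.ker b).mkQ (Submodule.mkQ_surjective _)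
  -- choose a basis and pass to matrices
  let ι := Module.Free.ChooseBasisIndex ℤ (K ⧸ LinearMap.ker b)
  let B : Module.Basis ι ℤ (K ⧸ LinearMap.ker b) := Module.Free.chooseBasis ℤ _
  let e : (K ⧸ LinearMap.ker b) ≃ₗ[ℤ] Module.Dual ℤ (K ⧸ LinearMap.ker b) :=
    B.equiv B.dualBasis (Equiv.refl ι)
  let f : (K ⧸ LinearMap.ker b) →ₗ[ℤ] (K ⧸ LinearMap.ker b) := e.symm.toLinearMap ∘ₗ b'
  have hfinj : Function.Injective f := fun a c h => hinj (e.symm.injective h)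
  let M : Matrix ι ι ℤ := LinearMap.toMatrix B B f
  have hM : f = Matrix.toLin B B M := (Matrix.toLin_toMatrix B B f).symm
  have hdet : M.det ≠ 0 := by
    intro h0
    obtain ⟨v, hv, hMv⟩ := Matrix.exists_mulVec_eq_zero_iff.mpr h0
    apply hv
    set x := B.equivFun.symm v with hxdef
    have hrx : ⇑(B.repr x) = v := by
      have h2 := B.equivFun.apply_symm_apply v
      rwa [Module.Basis.equivFun_apply] at h2
    have hfx : f x = 0 := by
      have h1 := LinearMap.toMatrix_mulVec_repr B B f x
      rw [hrx, hMv] at h1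
      have h2 : B.repr (f x) = 0 := by
        ext i
        exact (congrFun h1.symm i)
      simpa using B.repr.injective (by simpa using h2)
    have hx0 : x = 0 := hfinj (by simpa using hfx)
    rw [← hrx, hx0]
    simp
  -- adjugate trick: det • ψ is in the range of f
  have key : ∀ ψ, f (Matrix.toLin B B M.adjugate ψ) = M.det • ψ := by
    intro ψ
    conv_lhs => rw [hM]
    rw [← LinearMap.comp_apply, ← Matrix.toLin_mul, Matrix.mul_adjugate, LinearEquiv.map_smul,
      Matrix.toLin_one]
    simp only [LinearMap.smul_apply, LinearMap.id_apply]
    exact int_smul_eq_zsmul _ _ _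
  -- surjectivity
  have hsurj : Function.Surjective b' := by
    intro φ
    have hd : b' (Matrix.toLin B B M.adjugate (e.symm φ)) = M.det • φ := by
      apply e.symm.injective
      rw [map_zsmul]
      exact key (e.symm φ)
    obtain ⟨x, hx⟩ := Submodule.Quotient.mk_surjective _
      (Matrix.toLin B B M.adjugate (e.symm φ))
    let i : Module.Dual ℤ (K ⧸ LinearMap.ker b) →ₗ[ℤ] Module.Dual ℤ K :=
      (LinearMap.ker b).mkQ.dualMap
    have hib : ∀ z : K, i (b' (Submodule.Quotient.mk z)) = b z := by
      intro z
      ext y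
      have h4 : (LinearMap.ker b).mkQ y = Submodule.Quotient.mk y := rfl
      simp [i, LinearMap.dualMap_apply, h4, hb'mk]
    have hiinj : Function.Injective i := by
      intro ψ₁ ψ₂ h12
      apply Submodule.linearMap_qext
      ext y
      exact LinearMap.congr_fun h12 y
    have hc : M.det • (Submodule.Quotient.mk (i φ) :
        Module.Dual ℤ K ⧸ LinearMap.range b) = 0 := by
      have h3 : M.det • i φ = b x := by
        calc M.det • i φ = i (M.det • φ) := (map_zsmul i _ _).symm
          _ = i (b' (Submodule.Quotient.mk x)) := by rw [← hd, hx]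
          _ = b x := hib x
      have hmk : (Submodule.Quotient.mk (i φ) :
          Module.Dual ℤ K ⧸ LinearMap.range b) = (LinearMap.range b).mkQ (i φ) := rfl
      rw [hmk, ← map_zsmul ((LinearMap.range b).mkQ), h3, Submodule.mkQ_apply]
      exact (Submodule.Quotient.mk_eq_zero _).mpr ⟨x, rfl⟩
    rcases htf _ M.det hc with h | h
    · exact absurd h hdet
    · obtain ⟨z, hz⟩ := (Submodule.Quotient.mk_eq_zero _).mp h
      refine ⟨Submodule.Quotient.mk z, ?_⟩
      apply hiinj
      rw [hib z, hz]
  exact ⟨hfree, b', hb'mk, hinj, hsurj⟩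

end Aux

/-- Step iii) of Proposition 13 in Kreck's surgery paper: if the cokernel of the adjoint
`b̂ : K → K*` of a symmetric bilinear form on a finitely generated free ℤ-module is
torsion-free, then `K/rad(b)` is free and the induced form on it is unimodular. Note
`rad(b) = ker(b̂)`. -/
theorem quotient_by_radical_unimodular
    {K : Type*} [AddCommGroup K] [Module ℤ K] [Module.Free ℤ K] [Module.Finite ℤ K]
    (b : K →ₗ[ℤ] Module.Dual ℤ K) (hsym : ∀ x y : K, b x y = b y x)
    (htf : ∀ (x : Module.Dual ℤ K ⧸ LinearMap.range b) (n : ℤ), n • x = 0 → n = 0 ∨ x = 0) :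
    Module.Free ℤ (K ⧸ LinearMap.ker b) ∧
    ∃ b' : (K ⧸ LinearMap.ker b) →ₗ[ℤ] (K ⧸ LinearMap.ker b) →ₗ[ℤ] ℤ,
      (∀ x y : K, b' (Submodule.Quotient.mk x) (Submodule.Quotient.mk y) = b x y) ∧
      Function.Bijective b' := by
  rw [Subsingleton.elim (AddCommGroup.toIntModule (K ⧸ LinearMap.ker b))
      (Submodule.Quotient.module (LinearMap.ker b))]
  exact quotient_by_radical_unimodular_aux b hsym htf
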